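/- Let Σ₁, Σ₂ be symmetric positive definite and T the symmetric positive definite solution of T Σ₁ T = Σ₂. Define Σ(t) = ((1−t)I + tT) Σ₁ ((1−t)I + tT) for t ∈ [0,1]. Then for every t, Tr(Σ₁ + Σ(t) − 2(Σ₁^{1/2} Σ(t) Σ₁^{1/2})^{1/2}) = t² · Tr(Σ₁ + Σ₂ − 2(Σ₁^{1/2} Σ₂ Σ₁^{1/2})^{1/2}). In particular, the Wasserstein distance satisfies W(Σ₁, Σ(t)) = t·W(Σ₁, Σ₂). -/

import Mathlib

open Matrix

section
open scoped ComplexOrder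

/-- The square root of a positive semidefinite matrix, with its definition from the older Mathlib
(removed from current Mathlib). -/
noncomputable def Matrix.PosSemidef.sqrt {n 𝕜 : Type*} [Fintype n] [RCLike 𝕜] [DecidableEq n]
    {A : Matrix n n 𝕜} (hA : A.PosSemidef) : Matrix n n 𝕜 :=
  hA.1.eigenvectorUnitary.1 * diagonal ((↑) ∘ (√·) ∘ hA.1.eigenvalues) *
    (star hA.1.eigenvectorUnitary : Matrix n n 𝕜)

lemma Matrix.PosSemidef.posSemidef_sqrt {n 𝕜 : Type*} [Fintype n] [RCLike 𝕜] [DecidableEq n]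
    {A : Matrix n n 𝕜} (hA : A.PosSemidef) : hA.sqrt.PosSemidef := by
  unfold Matrix.PosSemidef.sqrt
  refine PosSemidef.mul_mul_conjTranspose_same ?_ _
  refine posSemidef_diagonal_iff.mpr fun i => ?_
  simp only [Function.comp_apply, RCLike.ofReal_nonneg]
  exact Real.sqrt_nonneg _

end

/-- The matrix `A^{1/2} B A^{1/2}` is positive semidefinite. -/
lemma sandwich_psd {n : ℕ} {A B : Matrix (Fin n) (Fin n) ℝ} (hA : A.PosDef) (hB : B.PosSemidef) :
    (hA.posSemidef.sqrt * B * hA.posSemidef.sqrt).PosSemidef := by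
  have h := hB.conjTranspose_mul_mul_same hA.posSemidef.sqrt
  rwa [hA.posSemidef.posSemidef_sqrt.isHermitian.eq] at h

lemma psd_smul {n : ℕ} {c : ℝ} (hc : 0 ≤ c) {A : Matrix (Fin n) (Fin n) ℝ}
    (hA : A.PosSemidef) : (c • A).PosSemidef := by
  constructor
  · unfold Matrix.IsHermitian
    rw [conjTranspose_smul, hA.1.eq]
    simp
  · intro x
    exact (hA.smul hc).2 x

lemma psd_trace_nonneg {n : ℕ} {A : Matrix (Fin n) (Fin n) ℝ} (hA : A.PosSemidef) :
    0 ≤ A.trace := by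
  have h : ∀ i, 0 ≤ A i i := fun i => by simpa using hA.dotProduct_mulVec_nonneg (Pi.single i 1)
  exact Finset.sum_nonneg fun i _ => h i

lemma psd_sqrt_eq_cfc {n : ℕ} {A : Matrix (Fin n) (Fin n) ℝ} (hA : A.PosSemidef) :
    hA.sqrt = cfc Real.sqrt A := by
  rw [hA.1.cfc_eq, IsHermitian.cfc, Unitary.conjStarAlgAut_apply]
  rfl

lemma psd_spec_nonneg {n : ℕ} {A : Matrix (Fin n) (Fin n) ℝ} (hA : A.PosSemidef) :
    ∀ x ∈ spectrum ℝ A, 0 ≤ x := fun x hx => by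
  obtain ⟨i, rfl⟩ := hA.1.spectrum_real_eq_range_eigenvalues ▸ hx
  exact hA.eigenvalues_nonneg i

lemma Matrix.PosSemidef.sqrt_mul_self {n : ℕ} {A : Matrix (Fin n) (Fin n) ℝ}
    (hA : A.PosSemidef) : hA.sqrt * hA.sqrt = A := by
  have hsa : IsSelfAdjoint A := hA.1
  rw [psd_sqrt_eq_cfc, ← cfc_mul Real.sqrt Real.sqrt A]
  conv_rhs => rw [← cfc_id' ℝ A]
  exact cfc_congr (fun x hx => Real.mul_self_sqrt (psd_spec_nonneg hA x hx))

lemma Matrix.PosSemidef.eq_sqrt_of_sq_eq {n : ℕ} {A B : Matrix (Fin n) (Fin n) ℝ}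
    (hA : A.PosSemidef) (hB : B.PosSemidef) (h : A ^ 2 = B) : A = hB.sqrt := by
  have hsa : IsSelfAdjoint A := hA.1
  calc A = cfc (fun x : ℝ => x) A := (cfc_id' ℝ A).symm
    _ = cfc (fun x => Real.sqrt (x ^ 2)) A :=
        cfc_congr (fun x hx => (Real.sqrt_sq (psd_spec_nonneg hA x hx)).symm)
    _ = cfc Real.sqrt (cfc (fun x : ℝ => x ^ 2) A) := cfc_comp' Real.sqrt (fun x : ℝ => x ^ 2) A
    _ = hB.sqrt := by rw [cfc_pow_id A 2, h, psd_sqrt_eq_cfc]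

/-- trace of sqrt of sandwich: if M PSD then sqrt(R M S₁ M R) where S₁ = R², wait
key lemma: sqrt (R*M*S₁*M*R) = R*M*R when M PSD, R = sqrt S₁. -/
lemma sqrt_sandwich_eq {n : ℕ} {S₁ M : Matrix (Fin n) (Fin n) ℝ} (h1 : S₁.PosDef)
    (hM : M.PosSemidef)
    (hS : (h1.posSemidef.sqrt * (M * S₁ * M) * h1.posSemidef.sqrt).PosSemidef) :
    hS.sqrt = h1.posSemidef.sqrt * M * h1.posSemidef.sqrt := by
  set R := h1.posSemidef.sqrt with hR
  have hRMR : (R * M * R).PosSemidef := sandwich_psd h1 hM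
  have hsq : (R * M * R) ^ 2 = R * (M * S₁ * M) * R := by
    have hRR : R * R = S₁ := h1.posSemidef.sqrt_mul_self
    rw [pow_two]
    calc R * M * R * (R * M * R) = R * (M * ((R * R) * (M * R))) := by
          simp only [mul_assoc]
      _ = R * (M * S₁ * M) * R := by rw [hRR]; simp only [mul_assoc]
  exact (hRMR.eq_sqrt_of_sq_eq hS hsq).symm

/-- along the curve `Σ(t) = ((1−t)I + tT) Σ₁ ((1−t)I + tT)` one has
`Tr(Σ₁ + Σ(t) − 2(Σ₁^{1/2} Σ(t) Σ₁^{1/2})^{1/2}) = t² Tr(Σ₁ + Σ₂ − 2(Σ₁^{1/2} Σ₂ Σ₁^{1/2})^{1/2})`,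
and hence `W(Σ₁, Σ(t)) = t · W(Σ₁, Σ₂)`. -/
theorem wasserstein_geodesic_distance {n : ℕ} {S₁ S₂ T : Matrix (Fin n) (Fin n) ℝ}
    (h1 : S₁.PosDef) (h2 : S₂.PosDef) (hT : T.PosDef) (hTeq : T * S₁ * T = S₂) :
    ∀ t : ℝ, t ∈ Set.Icc (0 : ℝ) 1 →
    ∀ hSt : ((((1 - t) • (1 : Matrix (Fin n) (Fin n) ℝ) + t • T) * S₁ *
              ((1 - t) • (1 : Matrix (Fin n) (Fin n) ℝ) + t • T))).PosSemidef,
      (S₁.trace + (((1 - t) • (1 : Matrix (Fin n) (Fin n) ℝ) + t • T) * S₁ *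
          ((1 - t) • (1 : Matrix (Fin n) (Fin n) ℝ) + t • T)).trace
        - 2 * ((sandwich_psd h1 hSt).sqrt).trace)
      = t ^ 2 * (S₁.trace + S₂.trace - 2 * ((sandwich_psd h1 h2.posSemidef).sqrt).trace) ∧
      Real.sqrt (S₁.trace + (((1 - t) • (1 : Matrix (Fin n) (Fin n) ℝ) + t • T) * S₁ *
          ((1 - t) • (1 : Matrix (Fin n) (Fin n) ℝ) + t • T)).trace
        - 2 * ((sandwich_psd h1 hSt).sqrt).trace)
      = t * Real.sqrt (S₁.trace + S₂.trace - 2 * ((sandwich_psd h1 h2.posSemidef).sqrt).trace) := by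
  intro t ht hSt
  obtain ⟨ht0, ht1⟩ := ht
  set R := h1.posSemidef.sqrt with hR
  set M : Matrix (Fin n) (Fin n) ℝ := (1 - t) • 1 + t • T with hM
  have hMpsd : M.PosSemidef :=
    (psd_smul (by linarith) Matrix.PosSemidef.one).add (psd_smul ht0 hT.posSemidef)
  -- trace of sqrt at t
  have hSt' : (R * (M * S₁ * M) * R).PosSemidef := by
    have := hSt; exact sandwich_psd h1 hSt
  have e1 : (sandwich_psd h1 hSt).sqrt = R * M * R := sqrt_sandwich_eq h1 hMpsd _
  -- trace of sqrt at 1 : S₂ = T * S₁ * T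
  have e2 : (sandwich_psd h1 h2.posSemidef).sqrt = R * T * R := by
    have hRTR : (R * T * R).PosSemidef := sandwich_psd h1 hT.posSemidef
    have hRR : R * R = S₁ := h1.posSemidef.sqrt_mul_self
    have hsq : (R * T * R) ^ 2 = R * S₂ * R := by
      rw [pow_two, ← hTeq]
      calc R * T * R * (R * T * R) = R * (T * ((R * R) * (T * R))) := by
            simp only [mul_assoc]
        _ = R * (T * S₁ * T) * R := by rw [hRR]; simp only [mul_assoc]
    exact (hRTR.eq_sqrt_of_sq_eq _ hsq).symm
  -- abbreviations for traces
  have hRR : R * R = S₁ := h1.posSemidef.sqrt_mul_self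
  have trRMR : (R * M * R).trace = (M * S₁).trace := by
    rw [trace_mul_cycle, hRR, trace_mul_comm]
  have trRTR : (R * T * R).trace = (T * S₁).trace := by
    rw [trace_mul_cycle, hRR, trace_mul_comm]
  -- expand trace of M * S₁ * M
  have trMSM : (M * S₁ * M).trace =
      (1 - t)^2 * S₁.trace + 2 * t * (1 - t) * (T * S₁).trace + t^2 * S₂.trace := by
    rw [← hTeq, hM]
    have hcomm : (S₁ * T).trace = (T * S₁).trace := trace_mul_comm _ _
    simp only [add_mul, mul_add, smul_mul_assoc, mul_smul_comm, trace_add, trace_smul,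
      one_mul, mul_one, smul_eq_mul]
    linear_combination (t * (1 - t)) * hcomm
  have trMS : (M * S₁).trace = (1 - t) * S₁.trace + t * (T * S₁).trace := by
    rw [hM]
    simp [add_mul, smul_mul_assoc, trace_add, trace_smul, smul_eq_mul]
  -- nonnegativity of the t = 1 value
  have key : S₁.trace + S₂.trace - 2 * (T * S₁).trace = ((1 - T) * S₁ * (1 - T)).trace := by
    rw [← hTeq]
    have hcomm : (S₁ * T).trace = (T * S₁).trace := trace_mul_comm _ _
    simp only [sub_mul, mul_sub, one_mul, mul_one, trace_sub]
    linarith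
  have hE : 0 ≤ S₁.trace + S₂.trace - 2 * (T * S₁).trace := by
    rw [key]
    have h := h1.posSemidef.conjTranspose_mul_mul_same (1 - T)
    rw [show (1 - T)ᴴ = 1 - T by
      rw [conjTranspose_sub, hT.isHermitian.eq]; simp] at h
    exact psd_trace_nonneg h
  have main : S₁.trace + (M * S₁ * M).trace - 2 * ((sandwich_psd h1 hSt).sqrt).trace
      = t ^ 2 * (S₁.trace + S₂.trace - 2 * (T * S₁).trace) := by
    rw [e1, trRMR, trMSM, trMS]; ring
  have e2tr : ((sandwich_psd h1 h2.posSemidef).sqrt).trace = (T * S₁).trace := by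
    rw [e2, trRTR]
  constructor
  · rw [main, e2tr]
  · rw [main, e2tr, Real.sqrt_mul (sq_nonneg t), Real.sqrt_sq ht0]
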